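/- Let x and y be strict contractions in a unital C*-algebra (‖x‖ < 1, ‖y‖ < 1) and set T_x(y) = (1 − x x*)^{-1/2} (x + y)(1 + x* y)^{-1} (1 − x* x)^{1/2}. Then ‖T_x(y)‖ < 1 and 1 − ‖T_x(y)‖² ≤ (1 + ‖x‖²)·(1 − ‖y‖²) / (1 − ‖x‖·‖y‖)². -/

import Mathlib

/-- The inverse hyperbolic tangent `artanh t = (1/2)·log((1+t)/(1-t))`. -/
noncomputable def artanh (t : ℝ) : ℝ := Real.log ((1 + t) / (1 - t)) / 2

/-- `(1 - x x*)^{-1/2}`-type inverse square roots via the continuous functional calculus. -/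
noncomputable def cfcInvSqrt {B : Type*} [CStarAlgebra B] (a : B) : B :=
  cfc (fun t : ℝ => (Real.sqrt t)⁻¹) a

/-- Square roots via the continuous functional calculus. -/
noncomputable def cfcSqrt {B : Type*} [CStarAlgebra B] (a : B) : B :=
  cfc Real.sqrt a

/-- The Möbius map `T_x(y) = (1 − x x*)^{-1/2} (x + y)(1 + x* y)^{-1} (1 − x* x)^{1/2}`. -/
noncomputable def mobiusMap {B : Type*} [CStarAlgebra B] (x y : B) : B :=
  cfcInvSqrt (1 - x * star x) * (x + y) * Ring.inverse (1 + star x * y) *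
    cfcSqrt (1 - star x * x)

/-- The hyperbolic distance
`ρ(x,y) = artanh ‖(1 − x x*)^{-1/2} (x − y)(1 − x* y)^{-1} (1 − x* x)^{1/2}‖ = artanh ‖T_{−x}(y)‖`
on the open unit ball of a unital C*-algebra. -/
noncomputable def hypDist {B : Type*} [CStarAlgebra B] (x y : B) : ℝ :=
  artanh ‖cfcInvSqrt (1 - x * star x) * (x - y) * Ring.inverse (1 - star x * y) *
    cfcSqrt (1 - star x * x)‖

open scoped Pointwise

section Aux

lemma key_ring_identity {R : Type*} [Ring R] (x x' y y' e di : R)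
    (he : e * (1 - x * x') = 1) (he' : (1 - x * x') * e = 1)
    (hd : di * (1 - x' * x) = 1) (hd' : (1 - x' * x) * di = 1) :
    (x' + y') * e * (x + y) + (1 - y' * y)
      = (1 + y' * x) * di * (1 + x' * y) := by
  have h1 : e * x = x * di := by
    calc e * x = e * x * ((1 - x' * x) * di) := by rw [hd', mul_one]
    _ = (e * (1 - x * x')) * (x * di) := by noncomm_ring
    _ = x * di := by rw [he, one_mul]
  have h2 : x' * e = di * x' := by
    calc x' * e = (di * (1 - x' * x)) * (x' * e) := by rw [hd, one_mul]
    _ = (di * x') * ((1 - x * x') * e) := by noncomm_ring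
    _ = di * x' := by rw [he', mul_one]
  have h3 : x * di * x' = e - 1 := by
    calc x * di * x' = (e * x) * x' := by rw [h1]
    _ = e - e * (1 - x * x') := by noncomm_ring
    _ = e - 1 := by rw [he]
  have h3' : e = x * di * x' + 1 := by rw [h3]; noncomm_ring
  have expand : (1 + y' * x) * di * (1 + x' * y)
      = (di * x') * x + (di * x') * y + y' * (x * di) + y' * (x * di * x' + 1) * y
        + (di * (1 - x' * x) - y' * y) := by noncomm_ring
  rw [hd] at expand
  calc (x' + y') * e * (x + y) + (1 - y' * y)
      = (x' * e) * x + (x' * e) * y + y' * (e * x) + y' * e * y + (1 - y' * y) := by noncomm_ring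
  _ = (di * x') * x + (di * x') * y + y' * (x * di) + y' * (x * di * x' + 1) * y
        + (1 - y' * y) := by rw [h2, h1, h3']
  _ = (1 + y' * x) * di * (1 + x' * y) := expand.symm

lemma starT_mul_T {R : Type*} [Ring R] (x x' y y' a b s e di ui ui' : R)
    (haa : a * a = e)
    (he : e * (1 - x * x') = 1) (he' : (1 - x * x') * e = 1)
    (hd : di * (1 - x' * x) = 1) (hd' : (1 - x' * x) * di = 1)
    (hbdb : b * di * b = 1)
    (hss : s * s = 1 - y' * y)
    (huiu : ui' * (1 + y' * x) = 1) (huui : (1 + x' * y) * ui = 1) :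
    (b * ui' * (x' + y') * a) * (a * (x + y) * ui * b)
      = 1 - (b * ui' * s) * (s * ui * b) := by
  have hkey2 : (x' + y') * e * (x + y)
      = (1 + y' * x) * di * (1 + x' * y) - (1 - y' * y) :=
    eq_sub_of_add_eq (key_ring_identity x x' y y' e di he he' hd hd')
  calc (b * ui' * (x' + y') * a) * (a * (x + y) * ui * b)
      = (b * ui' * (x' + y')) * (a * a) * ((x + y) * (ui * b)) := by
        simp only [mul_assoc]
    _ = (b * ui' * (x' + y')) * e * ((x + y) * (ui * b)) := by rw [haa]
    _ = b * ui' * ((x' + y') * e * (x + y)) * (ui * b) := by simp only [mul_assoc]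
    _ = b * ui' * ((1 + y' * x) * di * (1 + x' * y) - (1 - y' * y)) * (ui * b) := by
        rw [hkey2]
    _ = (b * (ui' * (1 + y' * x))) * di * (((1 + x' * y) * ui) * b)
          - b * ui' * (1 - y' * y) * (ui * b) := by noncomm_ring
    _ = b * di * b - b * ui' * (s * s) * (ui * b) := by
        rw [huiu, huui, mul_one, one_mul, hss]
    _ = 1 - b * ui' * (s * s) * (ui * b) := by rw [hbdb]
    _ = 1 - (b * ui' * s) * (s * ui * b) := by noncomm_ring

variable {B : Type*} [CStarAlgebra B]

lemma norm_mem_spec_star_mul_self [Nontrivial B] (z : B) :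
    ‖star z * z‖ ∈ spectrum ℝ (star z * z) := by
  rcases CStarAlgebra.norm_or_neg_norm_mem_spectrum (a := star z * z)
      (IsSelfAdjoint.star_mul_self z) with h | h
  · exact h
  · have h0 := spectrum_star_mul_self_nonneg _ h
    have : ‖star z * z‖ = 0 := le_antisymm (by linarith) (norm_nonneg _)
    rwa [this, ← neg_zero, ← this]

lemma spec_lb [Nontrivial B] (z : B) :
    ∀ μ ∈ spectrum ℝ (1 - star z * z), 1 - ‖z‖ ^ 2 ≤ μ := by
  intro μ hμ
  have h1 : (1 : ℝ) - μ ∈ spectrum ℝ (star z * z) := by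
    have key := spectrum.singleton_sub_eq (star z * z) (1 : ℝ)
    have hmem : μ ∈ ({(1:ℝ)} : Set ℝ) - spectrum ℝ (star z * z) := by
      rw [key]; simpa using hμ
    obtain ⟨r, hr, s, hs, hrs⟩ := Set.mem_sub.mp hmem
    simp only [Set.mem_singleton_iff] at hr
    subst hr
    have : s = 1 - μ := by linarith
    rwa [← this]
  have h2 := spectrum.norm_le_norm_of_mem h1
  have h3 : ‖star z * z‖ ≤ ‖z‖ ^ 2 := by
    calc ‖star z * z‖ ≤ ‖star z‖ * ‖z‖ := norm_mul_le _ _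
    _ = ‖z‖ ^ 2 := by rw [norm_star]; ring
  have := (abs_le.mp (le_trans h2 h3 : |1 - μ| ≤ ‖z‖ ^ 2)).2
  linarith

lemma one_sub_mem_spec [Nontrivial B] {p q : B} (hpq : p = 1 - q) {μ : ℝ}
    (hμ : μ ∈ spectrum ℝ q) : 1 - μ ∈ spectrum ℝ p := by
  have key := spectrum.singleton_sub_eq q (1 : ℝ)
  have : (1 : ℝ) - μ ∈ ({(1:ℝ)} : Set ℝ) - spectrum ℝ q :=
    Set.sub_mem_sub rfl hμ
  rw [key] at this
  simpa [hpq] using this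

end Aux

section CfcAux

noncomputable def cfcInvSqrt' {B : Type*} [CStarAlgebra B] (a : B) : B :=
  cfc (fun t : ℝ => (Real.sqrt t)⁻¹) a

variable {B : Type*} [CStarAlgebra B]

variable {d : B} (hd : IsSelfAdjoint d) {ε : ℝ} (hε : 0 < ε)
  (hspec : ∀ μ ∈ spectrum ℝ d, ε ≤ μ)

include hd hε hspec

lemma sqrt_mul_self' : cfc Real.sqrt d * cfc Real.sqrt d = d := by
  rw [← cfc_mul ..]
  calc cfc (fun t : ℝ => Real.sqrt t * Real.sqrt t) d = cfc (id : ℝ → ℝ) d := by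
        apply cfc_congr
        intro t ht
        exact Real.mul_self_sqrt (le_trans hε.le (hspec t ht))
  _ = d := cfc_id ℝ d

lemma sqrt_isUnit' : IsUnit (cfc Real.sqrt d) := by
  apply isUnit_cfc (f := Real.sqrt) (a := d)
  intro t ht
  have := lt_of_lt_of_le hε (hspec t ht)
  positivity

omit hd in
lemma cont_invsqrt' : ContinuousOn (fun t : ℝ => (Real.sqrt t)⁻¹) (spectrum ℝ d) := by
  apply ContinuousOn.inv₀ (Real.continuous_sqrt.continuousOn)
  intro t ht
  have := lt_of_lt_of_le hε (hspec t ht)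
  positivity

lemma invsqrt_mul_self' : cfcInvSqrt' d * cfcInvSqrt' d = Ring.inverse d := by
  have hc := cont_invsqrt' hε hspec
  rw [cfcInvSqrt', ← cfc_mul _ _ d hc hc]
  have h2 : ∀ t ∈ spectrum ℝ d, t ≠ 0 := fun t ht => by
    have := lt_of_lt_of_le hε (hspec t ht); positivity
  calc cfc (fun t : ℝ => (Real.sqrt t)⁻¹ * (Real.sqrt t)⁻¹) d
      = cfc (fun t : ℝ => ((id t) : ℝ)⁻¹) d := by
        apply cfc_congr
        intro t ht
        have h1 := lt_of_lt_of_le hε (hspec t ht)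
        show (Real.sqrt t)⁻¹ * (Real.sqrt t)⁻¹ = (id t : ℝ)⁻¹
        rw [← mul_inv, Real.mul_self_sqrt h1.le, id]
  _ = Ring.inverse (cfc (id : ℝ → ℝ) d) := cfc_inv id d h2
  _ = Ring.inverse d := by rw [cfc_id ℝ d]

lemma sqrt_inv_sqrt' : cfc Real.sqrt d * Ring.inverse d * cfc Real.sqrt d = 1 := by
  have h2 : ∀ t ∈ spectrum ℝ d, (id t : ℝ) ≠ 0 := fun t ht => by
    have := lt_of_lt_of_le hε (hspec t ht); positivity
  have hinv : Ring.inverse d = cfc (fun t : ℝ => t⁻¹) d := by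
    conv_lhs => rw [← cfc_id ℝ d]
    exact (cfc_inv id d h2).symm
  have hcinv : ContinuousOn (fun t : ℝ => t⁻¹) (spectrum ℝ d) := by
    apply ContinuousOn.inv₀ continuousOn_id
    intro t ht; exact h2 t ht
  rw [hinv, ← cfc_mul _ _ d (by fun_prop) hcinv,
    ← cfc_mul (fun t : ℝ => Real.sqrt t * t⁻¹) Real.sqrt d (Real.continuous_sqrt.continuousOn.mul hcinv) (by fun_prop)]
  calc cfc (fun t : ℝ => Real.sqrt t * t⁻¹ * Real.sqrt t) d = cfc (1 : ℝ → ℝ) d := by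
        apply cfc_congr
        intro t ht
        have h1 := lt_of_lt_of_le hε (hspec t ht)
        show Real.sqrt t * t⁻¹ * Real.sqrt t = 1
        rw [mul_comm (Real.sqrt t) t⁻¹, mul_assoc, Real.mul_self_sqrt h1.le,
          inv_mul_cancel₀ (ne_of_gt h1)]
  _ = 1 := cfc_one ℝ d

end CfcAux

set_option maxHeartbeats 1000000 in
/-- Let `x`, `y` be strict contractions in a unital C*-algebra and let
`T_x(y) = (1 − x x*)^{-1/2} (x + y)(1 + x* y)^{-1} (1 − x* x)^{1/2}`. Then `‖T_x(y)‖ < 1` and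
`1 − ‖T_x(y)‖² ≤ (1 + ‖x‖²)·(1 − ‖y‖²)/(1 − ‖x‖·‖y‖)²`. -/
theorem mobiusMap_norm_lt_one_and_estimate
    {B : Type*} [CStarAlgebra B] (x y : B) (hx : ‖x‖ < 1) (hy : ‖y‖ < 1) :
    ‖mobiusMap x y‖ < 1 ∧
      1 - ‖mobiusMap x y‖ ^ 2 ≤ (1 + ‖x‖ ^ 2) * (1 - ‖y‖ ^ 2) / (1 - ‖x‖ * ‖y‖) ^ 2 := by
  obtain hsub | hnt := subsingleton_or_nontrivial B
  · have h1 : mobiusMap x y = 0 := Subsingleton.elim _ _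
    have h2 : x = 0 := Subsingleton.elim _ _
    have h3 : y = 0 := Subsingleton.elim _ _
    rw [h1, h2, h3]
    norm_num
  -- basic numeric facts
  have hnx := norm_nonneg x
  have hny := norm_nonneg y
  have hx2 : (0:ℝ) < 1 - ‖x‖ ^ 2 := by nlinarith
  have hy2 : (0:ℝ) < 1 - ‖y‖ ^ 2 := by nlinarith
  have hxy : ‖x‖ * ‖y‖ < 1 := by nlinarith
  -- selfadjointness
  have hcsa : IsSelfAdjoint (1 - x * star x) :=
    (IsSelfAdjoint.one B).sub (IsSelfAdjoint.mul_star_self x)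
  have hdsa : IsSelfAdjoint (1 - star x * x) :=
    (IsSelfAdjoint.one B).sub (IsSelfAdjoint.star_mul_self x)
  have hgsa : IsSelfAdjoint (1 - star y * y) :=
    (IsSelfAdjoint.one B).sub (IsSelfAdjoint.star_mul_self y)
  -- spectrum lower bounds
  have hspecd : ∀ μ ∈ spectrum ℝ (1 - star x * x), 1 - ‖x‖ ^ 2 ≤ μ := spec_lb x
  have hspecg : ∀ μ ∈ spectrum ℝ (1 - star y * y), 1 - ‖y‖ ^ 2 ≤ μ := spec_lb y
  have hspecc : ∀ μ ∈ spectrum ℝ (1 - x * star x), 1 - ‖x‖ ^ 2 ≤ μ := by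
    have := spec_lb (star x)
    simpa [norm_star] using this
  -- units
  have hcu : IsUnit (1 - x * star x) := by
    rw [← spectrum.zero_notMem_iff ℝ]
    intro h0
    have := hspecc 0 h0
    linarith
  have hdu : IsUnit (1 - star x * x) := by
    rw [← spectrum.zero_notMem_iff ℝ]
    intro h0
    have := hspecd 0 h0
    linarith
  have hnormxy : ‖-(star x * y)‖ < 1 := by
    rw [norm_neg]
    calc ‖star x * y‖ ≤ ‖star x‖ * ‖y‖ := norm_mul_le _ _
    _ = ‖x‖ * ‖y‖ := by rw [norm_star]
    _ < 1 := hxy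
  have huu : IsUnit (1 + star x * y) := by
    have := isUnit_one_sub_of_norm_lt_one hnormxy
    rwa [sub_neg_eq_add] at this
  have hstaru : star (1 + star x * y) = 1 + star y * x := by
    simp [star_add, star_mul, star_star]
  have huu' : IsUnit (1 + star y * x) := by
    rw [← hstaru]
    exact huu.star
  -- cfc elements
  have haa : cfcInvSqrt (1 - x * star x) * cfcInvSqrt (1 - x * star x)
      = Ring.inverse (1 - x * star x) := invsqrt_mul_self' hcsa hx2 hspecc
  have hbb : cfcSqrt (1 - star x * x) * cfcSqrt (1 - star x * x) = 1 - star x * x :=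
    sqrt_mul_self' hdsa hx2 hspecd
  have hss : cfcSqrt (1 - star y * y) * cfcSqrt (1 - star y * y) = 1 - star y * y :=
    sqrt_mul_self' hgsa hy2 hspecg
  have hbdb : cfcSqrt (1 - star x * x) * Ring.inverse (1 - star x * x)
      * cfcSqrt (1 - star x * x) = 1 := sqrt_inv_sqrt' hdsa hx2 hspecd
  have hbu : IsUnit (cfcSqrt (1 - star x * x)) := sqrt_isUnit' hdsa hx2 hspecd
  have hsu : IsUnit (cfcSqrt (1 - star y * y)) := sqrt_isUnit' hgsa hy2 hspecg
  have hasa : IsSelfAdjoint (cfcInvSqrt (1 - x * star x)) := cfc_predicate _ _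
  have hbsa : IsSelfAdjoint (cfcSqrt (1 - star x * x)) := cfc_predicate _ _
  have hssa : IsSelfAdjoint (cfcSqrt (1 - star y * y)) := cfc_predicate _ _
  -- notation
  set a := cfcInvSqrt (1 - x * star x) with ha_def
  set b := cfcSqrt (1 - star x * x) with hb_def
  set s := cfcSqrt (1 - star y * y) with hs_def
  set e := Ring.inverse (1 - x * star x) with he_def
  set di := Ring.inverse (1 - star x * x) with hdi_def
  set ui := Ring.inverse (1 + star x * y) with hui_def
  set ui' := Ring.inverse (1 + star y * x) with hui'_def
  have he : e * (1 - x * star x) = 1 := Ring.inverse_mul_cancel _ hcu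
  have he' : (1 - x * star x) * e = 1 := Ring.mul_inverse_cancel _ hcu
  have hd : di * (1 - star x * x) = 1 := Ring.inverse_mul_cancel _ hdu
  have hd' : (1 - star x * x) * di = 1 := Ring.mul_inverse_cancel _ hdu
  have huiu : ui' * (1 + star y * x) = 1 := Ring.inverse_mul_cancel _ huu'
  have huui : (1 + star x * y) * ui = 1 := Ring.mul_inverse_cancel _ huu
  have hstarui : star ui = ui' := by
    rw [hui_def, ← Ring.inverse_star, hstaru, hui'_def]
  -- the Möbius map and its adjoint
  have hT : mobiusMap x y = a * (x + y) * ui * b := rfl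
  have hstarT : star (mobiusMap x y) = b * ui' * (star x + star y) * a := by
    calc star (mobiusMap x y)
        = star b * (star ui * (star (x + y) * star a)) := by
          simp only [hT, star_mul, mul_assoc]
    _ = b * (ui' * ((star x + star y) * a)) := by
          rw [hbsa.star_eq, hasa.star_eq, hstarui, star_add]
    _ = b * ui' * (star x + star y) * a := by simp only [mul_assoc]
  -- the fundamental identity
  have hmain : star (mobiusMap x y) * mobiusMap x y
      = 1 - (b * ui' * s) * (s * ui * b) := by
    rw [hstarT, hT]
    exact starT_mul_T x (star x) y (star y) a b s e di ui ui'
      haa he he' hd hd' hbdb hss huiu huui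
  have hstarv : star (s * ui * b) = b * ui' * s := by
    calc star (s * ui * b)
        = star b * (star ui * star s) := by simp only [star_mul, mul_assoc]
    _ = b * (ui' * s) := by rw [hbsa.star_eq, hssa.star_eq, hstarui]
    _ = b * ui' * s := by rw [mul_assoc]
  have hmain' : star (mobiusMap x y) * mobiusMap x y
      = 1 - star (s * ui * b) * (s * ui * b) := by rw [hstarv]; exact hmain
  -- units for v and q
  have hui_eq : ui = ↑huu.unit⁻¹ := by
    rw [← Ring.inverse_unit huu.unit, huu.unit_spec]
  set V : Bˣ := hsu.unit * huu.unit⁻¹ * hbu.unit with hV_def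
  have hV : (↑V : B) = s * ui * b := by
    rw [hV_def, Units.val_mul, Units.val_mul, hsu.unit_spec, hbu.unit_spec, hui_eq]
  set Q : Bˣ := star V * V with hQ_def
  have hQ : (↑Q : B) = star (s * ui * b) * (s * ui * b) := by
    rw [hQ_def, Units.val_mul, Units.coe_star, hV]
  have hQinv : (↑Q⁻¹ : B) = (↑V⁻¹ : B) * star (↑V⁻¹ : B) := by
    rw [hQ_def, mul_inv_rev, Units.val_mul, Units.coe_star_inv]
  have hnQinv : ‖(↑Q⁻¹ : B)‖ = ‖(↑V⁻¹ : B)‖ ^ 2 := by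
    rw [hQinv, CStarRing.norm_self_mul_star, sq]
  have hVinv_pos : (0:ℝ) < ‖(↑V⁻¹ : B)‖ := by
    rw [norm_pos_iff]
    exact Units.ne_zero _
  -- spectral estimates
  have hp_mem : ‖star (mobiusMap x y) * mobiusMap x y‖
      ∈ spectrum ℝ (star (mobiusMap x y) * mobiusMap x y) :=
    norm_mem_spec_star_mul_self (mobiusMap x y)
  set nP := ‖star (mobiusMap x y) * mobiusMap x y‖ with hnP_def
  have hqp : star (s * ui * b) * (s * ui * b)
      = 1 - star (mobiusMap x y) * mobiusMap x y := by
    rw [hmain']; abel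
  have hν_mem : 1 - nP ∈ spectrum ℝ (star (s * ui * b) * (s * ui * b)) :=
    one_sub_mem_spec hqp hp_mem
  have hν_nonneg : 0 ≤ 1 - nP := spectrum_star_mul_self_nonneg _ hν_mem
  have hν_ne : 1 - nP ≠ 0 := by
    intro h0
    rw [h0] at hν_mem
    have : (0:ℝ) ∉ spectrum ℝ (star (s * ui * b) * (s * ui * b)) := by
      rw [spectrum.zero_notMem_iff ℝ]
      rw [← hQ]
      exact Q.isUnit
    exact this hν_mem
  have hν_pos : 0 < 1 - nP := lt_of_le_of_ne hν_nonneg (Ne.symm hν_ne)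
  have hP_lt : nP < 1 := by linarith
  -- ‖T‖² = nP
  have hT2 : ‖mobiusMap x y‖ ^ 2 = nP := by
    rw [hnP_def, CStarRing.norm_star_mul_self, sq]
  have hT_lt : ‖mobiusMap x y‖ < 1 := by
    nlinarith [norm_nonneg (mobiusMap x y)]
  refine ⟨hT_lt, ?_⟩
  -- Part 2 : upper bound on 1 - nP
  -- ‖Q⁻¹‖ ∈ spectrum of Q⁻¹
  have hQn_mem : ‖(↑Q⁻¹ : B)‖ ∈ spectrum ℝ ((↑Q⁻¹ : B)) := by
    rw [hQinv]
    have := norm_mem_spec_star_mul_self (star (↑V⁻¹ : B))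
    simpa [star_star] using this
  have hQn_pos : (0:ℝ) < ‖(↑Q⁻¹ : B)‖ := by
    rw [norm_pos_iff]
    exact Units.ne_zero _
  -- hence ‖Q⁻¹‖⁻¹ ∈ spectrum of q
  have hQni_mem : ‖(↑Q⁻¹ : B)‖⁻¹ ∈ spectrum ℝ ((↑Q : B)) := by
    have h1 : ((Units.mk0 ‖(↑Q⁻¹ : B)‖ hQn_pos.ne') : ℝ) ∈ spectrum ℝ ((↑Q⁻¹ : B)) := hQn_mem
    have h2 := spectrum.inv_mem_iff.mp h1
    simpa using h2
  have hQmem' : 1 - ‖(↑Q⁻¹ : B)‖⁻¹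
      ∈ spectrum ℝ (star (mobiusMap x y) * mobiusMap x y) := by
    apply one_sub_mem_spec hmain'
    rwa [← hQ]
  have hstep : 1 - ‖(↑Q⁻¹ : B)‖⁻¹ ≤ nP := by
    have := spectrum.norm_le_norm_of_mem hQmem'
    have habs : |1 - ‖(↑Q⁻¹ : B)‖⁻¹| ≤ nP := this
    linarith [le_abs_self (1 - ‖(↑Q⁻¹ : B)‖⁻¹)]
  -- now bound ‖Q⁻¹‖⁻¹ = ‖V⁻¹‖⁻² from above
  -- norm of S⁻¹ from below
  have hSS : (↑(hsu.unit * hsu.unit) : B) = 1 - star y * y := by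
    rw [Units.val_mul, hsu.unit_spec, hss]
  have hyy_mem : ‖y‖ ^ 2 ∈ spectrum ℝ (star y * y) := by
    have := norm_mem_spec_star_mul_self y
    rwa [CStarRing.norm_star_mul_self, ← sq] at this
  have hg_mem : 1 - ‖y‖ ^ 2 ∈ spectrum ℝ ((↑(hsu.unit * hsu.unit) : B)) := by
    rw [hSS]
    exact one_sub_mem_spec rfl hyy_mem
  have hSSi_mem : (1 - ‖y‖ ^ 2)⁻¹ ∈ spectrum ℝ ((↑(hsu.unit * hsu.unit)⁻¹ : B)) := by
    have h1 : ((Units.mk0 (1 - ‖y‖ ^ 2) hy2.ne') : ℝ)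
        ∈ spectrum ℝ ((↑(hsu.unit * hsu.unit) : B)) := hg_mem
    have h2 := spectrum.inv_mem_iff.mp h1
    simpa using h2
  have hn1 : (1 - ‖y‖ ^ 2)⁻¹ ≤ ‖(↑(hsu.unit * hsu.unit)⁻¹ : B)‖ := by
    have := spectrum.norm_le_norm_of_mem hSSi_mem
    rwa [Real.norm_eq_abs, abs_of_pos (by positivity)] at this
  have hstarS : star hsu.unit = hsu.unit := by
    ext
    rw [Units.coe_star, hsu.unit_spec, hssa.star_eq]
  have hn2 : ‖(↑(hsu.unit * hsu.unit)⁻¹ : B)‖ = ‖(↑hsu.unit⁻¹ : B)‖ ^ 2 := by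
    rw [mul_inv_rev, Units.val_mul]
    have hsa' : star (↑hsu.unit⁻¹ : B) = (↑hsu.unit⁻¹ : B) := by
      rw [← Units.coe_star_inv, hstarS]
    calc ‖(↑hsu.unit⁻¹ : B) * (↑hsu.unit⁻¹ : B)‖
        = ‖star (↑hsu.unit⁻¹ : B) * (↑hsu.unit⁻¹ : B)‖ := by rw [hsa']
    _ = ‖(↑hsu.unit⁻¹ : B)‖ ^ 2 := by rw [CStarRing.norm_star_mul_self, sq]
  -- relation S⁻¹ = U⁻¹ * B * V⁻¹
  have hrel : huu.unit⁻¹ * hbu.unit * V⁻¹ = hsu.unit⁻¹ := by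
    rw [hV_def]
    group
  have hn3 : ‖(↑hsu.unit⁻¹ : B)‖
      ≤ ‖(↑huu.unit⁻¹ : B)‖ * ‖b‖ * ‖(↑V⁻¹ : B)‖ := by
    calc ‖(↑hsu.unit⁻¹ : B)‖
        = ‖(↑huu.unit⁻¹ : B) * (↑hbu.unit : B) * (↑V⁻¹ : B)‖ := by
          rw [← hrel, Units.val_mul, Units.val_mul]
    _ ≤ ‖(↑huu.unit⁻¹ : B) * (↑hbu.unit : B)‖ * ‖(↑V⁻¹ : B)‖ := norm_mul_le _ _
    _ ≤ ‖(↑huu.unit⁻¹ : B)‖ * ‖(↑hbu.unit : B)‖ * ‖(↑V⁻¹ : B)‖ := by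
          gcongr
          exact norm_mul_le _ _
    _ = ‖(↑huu.unit⁻¹ : B)‖ * ‖b‖ * ‖(↑V⁻¹ : B)‖ := by rw [hbu.unit_spec]
  -- norm of U⁻¹
  have hn4 : ‖(↑huu.unit⁻¹ : B)‖ ≤ (1 - ‖x‖ * ‖y‖)⁻¹ := by
    have h1 : (↑huu.unit⁻¹ : B) = Ring.inverse (1 - -(star x * y)) := by
      rw [sub_neg_eq_add, ← hui_def, hui_eq]
    have h2 := tsum_geometric_le_of_norm_lt_one (-(star x * y)) hnormxy
    rw [geom_series_eq_inverse _ hnormxy] at h2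
    rw [h1]
    have h3 : ‖(1:B)‖ = 1 := norm_one
    have h4 : ‖-(star x * y)‖ ≤ ‖x‖ * ‖y‖ := by
      rw [norm_neg]
      calc ‖star x * y‖ ≤ ‖star x‖ * ‖y‖ := norm_mul_le _ _
      _ = ‖x‖ * ‖y‖ := by rw [norm_star]
    have h5 : (1 - ‖-(star x * y)‖)⁻¹ ≤ (1 - ‖x‖ * ‖y‖)⁻¹ := by
      gcongr
    linarith
  -- norm of b
  have hn5 : ‖b‖ ^ 2 ≤ 1 + ‖x‖ ^ 2 := by
    have h1 : ‖b‖ ^ 2 = ‖(1 : B) - star x * x‖ := by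
      rw [sq, ← CStarRing.norm_star_mul_self (x := b), hbsa.star_eq, hbb]
    rw [h1]
    calc ‖(1:B) - star x * x‖ ≤ ‖(1:B)‖ + ‖star x * x‖ := norm_sub_le _ _
    _ ≤ 1 + ‖x‖ ^ 2 := by
        have : ‖star x * x‖ ≤ ‖x‖ ^ 2 := by
          calc ‖star x * x‖ ≤ ‖star x‖ * ‖x‖ := norm_mul_le _ _
          _ = ‖x‖ ^ 2 := by rw [norm_star, sq]
        rw [norm_one]
        linarith
  -- combine everything
  set nV := ‖(↑V⁻¹ : B)‖ with hnV_def
  set nS := ‖(↑hsu.unit⁻¹ : B)‖ with hnS_def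
  set nU := ‖(↑huu.unit⁻¹ : B)‖ with hnU_def
  set nb := ‖b‖ with hnb_def
  have hnS_pos : (0:ℝ) < nS := by
    rw [hnS_def, norm_pos_iff]
    exact Units.ne_zero _
  have hnU_pos : (0:ℝ) < nU := by
    rw [hnU_def, norm_pos_iff]
    exact Units.ne_zero _
  have hnb_pos : (0:ℝ) < nb := by
    rw [hnb_def, norm_pos_iff]
    intro h0
    rw [h0] at hbu
    exact not_isUnit_zero hbu
  rw [hn2] at hn1
  have hA : 1 ≤ nS ^ 2 * (1 - ‖y‖ ^ 2) := by
    have h6 := mul_le_mul_of_nonneg_right hn1 hy2.le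
    rwa [inv_mul_cancel₀ hy2.ne'] at h6
  have hB : nS ^ 2 ≤ (nU * nb * nV) ^ 2 :=
    pow_le_pow_left₀ hnS_pos.le hn3 2
  have hC : 1 ≤ (nU * nb * nV) ^ 2 * (1 - ‖y‖ ^ 2) :=
    le_trans hA (mul_le_mul_of_nonneg_right hB hy2.le)
  have hD : (nV ^ 2)⁻¹ ≤ (nU * nb) ^ 2 * (1 - ‖y‖ ^ 2) := by
    have h7 : (nV ^ 2)⁻¹ * ((nU * nb * nV) ^ 2 * (1 - ‖y‖ ^ 2))
        = (nU * nb) ^ 2 * (1 - ‖y‖ ^ 2) := by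
      field_simp
    calc (nV ^ 2)⁻¹ ≤ (nV ^ 2)⁻¹ * ((nU * nb * nV) ^ 2 * (1 - ‖y‖ ^ 2)) :=
          le_mul_of_one_le_right (by positivity) hC
    _ = (nU * nb) ^ 2 * (1 - ‖y‖ ^ 2) := h7
  have hE : (nU * nb) ^ 2 * (1 - ‖y‖ ^ 2)
      ≤ (1 + ‖x‖ ^ 2) * (1 - ‖y‖ ^ 2) / (1 - ‖x‖ * ‖y‖) ^ 2 := by
    have hxy' : (0:ℝ) < 1 - ‖x‖ * ‖y‖ := by linarith
    have h9 : nU ^ 2 ≤ ((1 - ‖x‖ * ‖y‖) ^ 2)⁻¹ := by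
      rw [← inv_pow]
      exact pow_le_pow_left₀ hnU_pos.le hn4 2
    have h8 : nU ^ 2 * nb ^ 2 ≤ ((1 - ‖x‖ * ‖y‖) ^ 2)⁻¹ * (1 + ‖x‖ ^ 2) :=
      mul_le_mul h9 hn5 (sq_nonneg nb) (by positivity)
    calc (nU * nb) ^ 2 * (1 - ‖y‖ ^ 2) = nU ^ 2 * nb ^ 2 * (1 - ‖y‖ ^ 2) := by ring
    _ ≤ ((1 - ‖x‖ * ‖y‖) ^ 2)⁻¹ * (1 + ‖x‖ ^ 2) * (1 - ‖y‖ ^ 2) :=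
      mul_le_mul_of_nonneg_right h8 hy2.le
    _ = (1 + ‖x‖ ^ 2) * (1 - ‖y‖ ^ 2) / (1 - ‖x‖ * ‖y‖) ^ 2 := by
      rw [div_eq_mul_inv]; ring
  -- final chain
  rw [hT2]
  calc 1 - nP ≤ ‖(↑Q⁻¹ : B)‖⁻¹ := by linarith
  _ = (nV ^ 2)⁻¹ := by rw [hnQinv]
  _ ≤ (nU * nb) ^ 2 * (1 - ‖y‖ ^ 2) := hD
  _ ≤ (1 + ‖x‖ ^ 2) * (1 - ‖y‖ ^ 2) / (1 - ‖x‖ * ‖y‖) ^ 2 := hE
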